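/- Let G = (V, E) be a finite graph and for each vertex v let P_v ⊆ ℤ. Then N(G; ∏_{v∈V} P_v) = ∑_{F ⊆ E} ((−1)^{|F|}/2^{|E|}) · ∏_{v∈V} C((1−z)^{d_F(v)} (1+z)^{d_v − d_F(v)}; P_v), where d_v is the degree of v in G and d_F(v) is the degree of v in the subgraph (V, F), and C(q; P) is the sum of coefficients of z^ℓ in q over ℓ ∈ P. -/

import Mathlib

open Finset Polynomial


open scoped Classical in
/-- `C(q ; P)`: the sum of coefficients of `z^ℓ` in `q` over `ℓ ∈ P`. -/
noncomputable def coeffSum (q : Polynomial ℚ) (P : Set ℤ) : ℚ :=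
  ∑ n ∈ q.support, if ((n : ℕ) : ℤ) ∈ P then q.coeff n else 0

/-- Degree of the vertex `v` in the edge subset `F`. -/
def subDegree {V : Type*} [DecidableEq V] (F : Finset (Sym2 V)) (v : V) : ℕ :=
  (F.filter fun e => v ∈ e).card


open scoped Classical in
lemma coeffSum_eq_sum_range (q : Polynomial ℚ) (P : Set ℤ) (d : ℕ) (hq : q.natDegree < d) :
    coeffSum q P = ∑ n ∈ Finset.range d, if ((n : ℕ) : ℤ) ∈ P then q.coeff n else 0 := by
  unfold coeffSum
  apply Finset.sum_subset (Polynomial.supp_subset_range hq)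
  intro n _ hn
  rw [Polynomial.notMem_support_iff.mp hn, ite_self]

lemma coeff_prod_eps {ι : Type*} [DecidableEq ι] (A : Finset ι) (ε : ι → ℚ) (n : ℕ) :
    (∏ e ∈ A, (Polynomial.C (ε e) * Polynomial.X + 1)).coeff n
      = ∑ S ∈ A.powersetCard n, ∏ e ∈ S, ε e := by
  rw [Finset.prod_add]
  simp only [Finset.prod_const_one, mul_one]
  have : ∀ t ∈ A.powerset, (∏ e ∈ t, (Polynomial.C (ε e) * Polynomial.X)) =
      Polynomial.C (∏ e ∈ t, ε e) * Polynomial.X ^ t.card := by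
    intro t _
    rw [Finset.prod_mul_distrib, map_prod Polynomial.C ε t, Finset.prod_const]
  rw [Finset.sum_congr rfl this]
  rw [Polynomial.finset_sum_coeff]
  simp only [Polynomial.coeff_C_mul, Polynomial.coeff_X_pow]
  rw [Finset.powersetCard_eq_filter, Finset.sum_filter]
  apply Finset.sum_congr rfl
  intro t _
  by_cases h : t.card = n <;> simp [h, Ne.symm]

lemma prod_eps_eq {ι : Type*} [DecidableEq ι] (A F : Finset ι) :
    (∏ e ∈ A, (Polynomial.C (if e ∈ F then (-1:ℚ) else 1) * Polynomial.X + 1))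
      = (1 - Polynomial.X) ^ (A ∩ F).card * (1 + Polynomial.X) ^ (A \ F).card := by
  have hu : A ∩ F ∪ A \ F = A := by ext x; simp [Finset.mem_union, Finset.mem_inter, Finset.mem_sdiff]; tauto
  conv_lhs => rw [← hu]
  rw [Finset.prod_union (Finset.disjoint_sdiff.mono_left Finset.inter_subset_right)]
  congr 1
  · rw [← Finset.prod_const]
    apply Finset.prod_congr rfl
    intro e he
    rw [if_pos (Finset.mem_inter.mp he).2, map_neg, map_one]
    ring
  · rw [← Finset.prod_const]
    apply Finset.prod_congr rfl
    intro e he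
    rw [if_neg (Finset.mem_sdiff.mp he).2, map_one, one_mul, add_comm]

lemma sum_over_F {ι W : Type*} [DecidableEq ι] [Fintype W] (E : Finset ι) (S : W → Finset ι) :
    ∑ F ∈ E.powerset, ((-1:ℚ) ^ F.card * ∏ v, (-1:ℚ) ^ (S v ∩ F).card)
      = ∏ e ∈ E, ((-1:ℚ) ^ (1 + (Finset.univ.filter fun v => e ∈ S v).card) + 1) := by
  rw [Finset.prod_add]
  simp only [Finset.prod_const_one, mul_one]
  apply Finset.sum_congr rfl
  intro F hF
  rw [Finset.prod_pow_eq_pow_sum]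
  have h1 : ∀ v, (S v ∩ F).card = ∑ e ∈ F, if e ∈ S v then 1 else 0 := by
    intro v
    rw [Finset.inter_comm, ← Finset.filter_mem_eq_inter, Finset.card_filter]
  have h2 : ∑ v : W, (S v ∩ F).card = ∑ e ∈ F, (Finset.univ.filter fun v => e ∈ S v).card := by
    simp only [h1]
    rw [Finset.sum_comm]
    apply Finset.sum_congr rfl
    intro e _
    rw [Finset.card_filter]
  rw [h2, ← Finset.prod_pow_eq_pow_sum]
  simp only [pow_add, pow_one, Finset.prod_mul_distrib, Finset.prod_const]

lemma natDeg_bound (a b : ℕ) :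
    ((1 - Polynomial.X : Polynomial ℚ) ^ a * (1 + Polynomial.X) ^ b).natDegree ≤ a + b := by
  refine Polynomial.natDegree_mul_le.trans (add_le_add ?_ ?_)
  · refine Polynomial.natDegree_pow_le.trans ?_
    have h : (1 - Polynomial.X : Polynomial ℚ).natDegree ≤ 1 :=
      (Polynomial.natDegree_sub_le _ _).trans (by simp)
    calc a * (1 - Polynomial.X : Polynomial ℚ).natDegree ≤ a * 1 := Nat.mul_le_mul_left a h
      _ = a := Nat.mul_one a
  · refine Polynomial.natDegree_pow_le.trans ?_
    have h : (1 + Polynomial.X : Polynomial ℚ).natDegree ≤ 1 :=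
      (Polynomial.natDegree_add_le _ _).trans (by simp)
    calc b * (1 + Polynomial.X : Polynomial ℚ).natDegree ≤ b * 1 := Nat.mul_le_mul_left b h
      _ = b := Nat.mul_one b

lemma prod_sign {ι : Type*} [DecidableEq ι] (S F : Finset ι) :
    ∏ e ∈ S, (if e ∈ F then (-1:ℚ) else 1) = (-1:ℚ) ^ (S ∩ F).card := by
  rw [Finset.prod_ite, Finset.prod_const, Finset.prod_const, one_pow, mul_one,
    Finset.filter_mem_eq_inter]

lemma card_mem_sym2_le {V : Type*} [Fintype V] [DecidableEq V] (e : Sym2 V) :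
    (Finset.univ.filter fun v => v ∈ e).card ≤ 2 := by
  induction e with
  | _ a b =>
    have hsub : (Finset.univ.filter fun v => v ∈ s(a, b)) ⊆ {a, b} := by
      intro v hv
      rw [Finset.mem_filter] at hv
      rcases Sym2.mem_iff.mp hv.2 with rfl | rfl
      · exact Finset.mem_insert_self _ _
      · exact Finset.mem_insert_of_mem (Finset.mem_singleton_self _)
    exact (Finset.card_le_card hsub).trans ((Finset.card_insert_le _ _).trans (by simp))



theorem duality
    {V : Type*} [Fintype V] [DecidableEq V] (G : SimpleGraph V) [DecidableRel G.Adj]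
    (P : V → Set ℤ) :
    (Nat.card {f : G.edgeFinset → V //
        (∀ e : G.edgeFinset, (f e : V) ∈ (e : Sym2 V)) ∧
        ∀ v : V, (((Finset.univ.filter fun e => f e = v).card : ℕ) : ℤ) ∈ P v} : ℚ) =
    ∑ F ∈ G.edgeFinset.powerset,
      ((-1 : ℚ) ^ F.card / 2 ^ G.edgeFinset.card) *
        ∏ v : V,
          coeffSum
            ((1 - Polynomial.X) ^ subDegree F v *
              (1 + Polynomial.X) ^ (G.degree v - subDegree F v)) (P v) := by
  classical
  set E := G.edgeFinset with hE
  set Ev : V → Finset (Sym2 V) := fun v => E.filter (fun e => v ∈ e) with hEv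
  set good : (V → Finset (Sym2 V)) → Prop :=
    fun S => ∀ e ∈ E, (Finset.univ.filter fun v => e ∈ S v).card = 1 with hgood
  set T : Finset (V → Finset (Sym2 V)) :=
    (Fintype.piFinset fun v => (Ev v).powerset).filter good with hT
  set ind : (V → Finset (Sym2 V)) → ℚ :=
    fun S => ∏ v : V, (if (((S v).card : ℕ) : ℤ) ∈ P v then 1 else 0) with hind
  have partB : (Nat.card {f : G.edgeFinset → V //
        (∀ e : G.edgeFinset, (f e : V) ∈ (e : Sym2 V)) ∧
        ∀ v : V, (((Finset.univ.filter fun e => f e = v).card : ℕ) : ℤ) ∈ P v} : ℚ)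
      = ∑ S ∈ T, ind S := by
    set p2 : (↥E → V) → Prop :=
      fun f => ∀ v : V, (((Finset.univ.filter fun e => f e = v).card : ℕ) : ℤ) ∈ P v with hp2
    set Ω : Finset (↥E → V) :=
      Finset.univ.filter (fun f : ↥E → V => ∀ e : ↥E, (f e : V) ∈ (e : Sym2 V)) with hΩ
    have h1 : (Nat.card {f : G.edgeFinset → V //
        (∀ e : G.edgeFinset, (f e : V) ∈ (e : Sym2 V)) ∧
        ∀ v : V, (((Finset.univ.filter fun e => f e = v).card : ℕ) : ℤ) ∈ P v} : ℕ)
        = (Ω.filter p2).card := by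
      rw [Nat.card_eq_fintype_card, Fintype.card_subtype, hΩ, Finset.filter_filter]
    rw [h1]
    rw [Finset.card_filter]
    push_cast
    have h2 : ∀ f ∈ Ω, (if ∀ v : V, (((Finset.univ.filter fun e => f e = v).card : ℕ) : ℤ) ∈ P v then (1:ℚ) else 0)
        = ∏ v : V, (if (((Finset.univ.filter fun e => f e = v).card : ℕ) : ℤ) ∈ P v then 1 else 0) :=
      fun f _ => (Fintype.prod_boole).symm
    rw [Finset.sum_congr rfl h2]
    -- now the bijection
    apply Finset.sum_bij (fun f _ => fun v => (Finset.univ.filter fun e : ↥E => f e = v).image Subtype.val)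
    · -- maps to T
      intro f hf
      rw [hΩ, Finset.mem_filter] at hf
      rw [hT, Finset.mem_filter]
      constructor
      · rw [Fintype.mem_piFinset]
        intro v
        rw [Finset.mem_powerset]
        intro e he
        rw [Finset.mem_image] at he
        obtain ⟨e', he', rfl⟩ := he
        rw [Finset.mem_filter] at he'
        rw [hEv, Finset.mem_filter]
        exact ⟨e'.2, he'.2 ▸ hf.2 e'⟩
      · intro e he
        have key : (Finset.univ.filter fun v =>
            e ∈ (Finset.univ.filter fun e' : ↥E => f e' = v).image Subtype.val) = {f ⟨e, he⟩} := by
          ext v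
          simp only [Finset.mem_filter, Finset.mem_image, Finset.mem_singleton, Finset.mem_univ,
            true_and]
          constructor
          · rintro ⟨e', he', rfl⟩
            rw [← he']
          · rintro rfl
            exact ⟨⟨e, he⟩, rfl, rfl⟩
        rw [key, Finset.card_singleton]
    · -- injective
      intro f hf g hg hfg
      funext e
      have h3 : (e : Sym2 V) ∈ (Finset.univ.filter fun e' : ↥E => f e' = f e).image Subtype.val :=
        Finset.mem_image.mpr ⟨e, Finset.mem_filter.mpr ⟨Finset.mem_univ _, rfl⟩, rfl⟩
      rw [congrFun hfg (f e)] at h3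
      rw [Finset.mem_image] at h3
      obtain ⟨e', he', hee⟩ := h3
      rw [Finset.mem_filter] at he'
      rw [← he'.2]
      congr 1
      exact Subtype.ext hee
    · -- surjective
      intro S hS
      rw [hT, Finset.mem_filter] at hS
      have hsub : ∀ v, S v ⊆ Ev v := fun v => Finset.mem_powerset.mp (Fintype.mem_piFinset.mp hS.1 v)
      have hcard : ∀ e : ↥E, ∃ v, ∀ w, (e : Sym2 V) ∈ S w ↔ w = v := by
        intro e
        obtain ⟨v, hv⟩ := Finset.card_eq_one.mp (hS.2 e e.2)
        refine ⟨v, fun w => ?_⟩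
        constructor
        · intro h
          have hw : w ∈ Finset.univ.filter (fun v => (e : Sym2 V) ∈ S v) :=
            Finset.mem_filter.mpr ⟨Finset.mem_univ _, h⟩
          rw [hv] at hw
          exact Finset.mem_singleton.mp hw
        · rintro rfl
          have hw : w ∈ ({w} : Finset V) := Finset.mem_singleton_self w
          rw [← hv] at hw
          exact (Finset.mem_filter.mp hw).2
      refine ⟨fun e => (hcard e).choose, ?_, ?_⟩
      · rw [hΩ, Finset.mem_filter]
        refine ⟨Finset.mem_univ _, fun e => ?_⟩
        have h := ((hcard e).choose_spec ((hcard e).choose)).mpr rfl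
        have h2 := hsub _ h
        rw [hEv] at h2
        exact (Finset.mem_filter.mp h2).2
      · funext v
        ext e
        simp only [Finset.mem_image, Finset.mem_filter, Finset.mem_univ, true_and]
        constructor
        · rintro ⟨e', he', rfl⟩
          exact ((hcard e').choose_spec v).mpr he'.symm
        · intro he
          have heE : e ∈ E := (Finset.mem_filter.mp (hsub v he)).1
          exact ⟨⟨e, heE⟩, (((hcard ⟨e, heE⟩).choose_spec v).mp he).symm, rfl⟩
    · -- values agree
      intro f hf
      rw [hind]
      apply Finset.prod_congr rfl
      intro v _
      rw [Finset.card_image_of_injective _ Subtype.val_injective]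
  have partA : ∑ F ∈ E.powerset,
      ((-1 : ℚ) ^ F.card / 2 ^ E.card) *
        ∏ v : V,
          coeffSum
            ((1 - Polynomial.X) ^ subDegree F v *
              (1 + Polynomial.X) ^ (G.degree v - subDegree F v)) (P v)
      = ∑ S ∈ T, ind S := by
    have hEvv : ∀ v : V, Ev v = G.incidenceFinset v := by
      intro v
      rw [hEv, SimpleGraph.incidenceFinset_eq_filter]
    have hdeg : ∀ v : V, (Ev v).card = G.degree v := by
      intro v
      rw [hEvv v, SimpleGraph.card_incidenceFinset_eq_degree]
    have hinter : ∀ F ∈ E.powerset, ∀ v : V, Ev v ∩ F = F.filter (fun e => v ∈ e) := by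
      intro F hF v
      rw [Finset.mem_powerset] at hF
      ext e
      simp only [hEv, Finset.mem_inter, Finset.mem_filter]
      constructor
      · rintro ⟨⟨_, h2⟩, h3⟩; exact ⟨h3, h2⟩
      · rintro ⟨h1, h2⟩; exact ⟨⟨hF h1, h2⟩, h1⟩
    have hsubD : ∀ F ∈ E.powerset, ∀ v : V, (Ev v ∩ F).card = subDegree F v := by
      intro F hF v
      rw [hinter F hF v, subDegree]
    have hsubD2 : ∀ F ∈ E.powerset, ∀ v : V,
        (Ev v \ F).card = G.degree v - subDegree F v := by
      intro F hF v
      have := Finset.card_inter_add_card_sdiff (Ev v) F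
      rw [hsubD F hF v, hdeg v] at this
      omega
    have hsubDle : ∀ F ∈ E.powerset, ∀ v : V, subDegree F v ≤ G.degree v := by
      intro F hF v
      rw [← hsubD F hF v, ← hdeg v]
      exact Finset.card_le_card Finset.inter_subset_left
    set c : Finset (Sym2 V) → V → ℕ → ℚ :=
      fun F v n => ∑ S ∈ (Ev v).powersetCard n, (-1:ℚ) ^ (S ∩ F).card with hc
    have step2 : ∀ F ∈ E.powerset, ∀ v : V,
        coeffSum ((1 - Polynomial.X) ^ subDegree F v *
            (1 + Polynomial.X) ^ (G.degree v - subDegree F v)) (P v)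
          = ∑ n ∈ Finset.range (G.degree v + 1),
              (if ((n : ℕ) : ℤ) ∈ P v then (1:ℚ) else 0) * c F v n := by
      intro F hF v
      have hdegb : ((1 - Polynomial.X : Polynomial ℚ) ^ subDegree F v *
          (1 + Polynomial.X) ^ (G.degree v - subDegree F v)).natDegree < G.degree v + 1 := by
        have h1 := natDeg_bound (subDegree F v) (G.degree v - subDegree F v)
        have h2 := hsubDle F hF v
        omega
      rw [coeffSum_eq_sum_range _ _ _ hdegb]
      apply Finset.sum_congr rfl
      intro n _
      rw [ite_mul, one_mul, zero_mul]
      congr 1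
      have heq : ((1 - Polynomial.X : Polynomial ℚ) ^ subDegree F v *
          (1 + Polynomial.X) ^ (G.degree v - subDegree F v))
          = ∏ e ∈ Ev v, (Polynomial.C (if e ∈ F then (-1:ℚ) else 1) * Polynomial.X + 1) := by
        rw [prod_eps_eq, hsubD F hF v, hsubD2 F hF v]
      rw [heq, coeff_prod_eps, hc]
      apply Finset.sum_congr rfl
      intro S _
      exact prod_sign S F
    have key : ∀ ℓ : V → ℕ,
        ∑ F ∈ E.powerset, ((-1:ℚ) ^ F.card * ∏ v : V, c F v (ℓ v))
          = 2 ^ E.card *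
            ∑ _S ∈ ((Fintype.piFinset fun v => (Ev v).powersetCard (ℓ v)).filter good),
              (1:ℚ) := by
      intro ℓ
      have e1 : ∀ F : Finset (Sym2 V), ∏ v : V, c F v (ℓ v)
          = ∑ S ∈ Fintype.piFinset (fun v => (Ev v).powersetCard (ℓ v)),
              ∏ v : V, (-1:ℚ) ^ (S v ∩ F).card := by
        intro F
        rw [hc]
        exact Finset.prod_univ_sum _ _
      simp only [e1, Finset.mul_sum]
      rw [Finset.sum_comm]
      have e2 : ∀ S ∈ Fintype.piFinset (fun v => (Ev v).powersetCard (ℓ v)),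
          ∑ F ∈ E.powerset, ((-1:ℚ) ^ F.card * ∏ v : V, (-1:ℚ) ^ (S v ∩ F).card)
            = if good S then (2:ℚ) ^ E.card else 0 := by
        intro S hS
        rw [sum_over_F E S]
        have hm : ∀ e : Sym2 V, (Finset.univ.filter fun v => e ∈ S v).card ≤ 2 := by
          intro e
          refine (Finset.card_le_card ?_).trans (card_mem_sym2_le e)
          intro v hv
          rw [Finset.mem_filter] at hv ⊢
          have hSv : S v ⊆ Ev v := by
            have := Fintype.mem_piFinset.mp hS v
            exact (Finset.mem_powersetCard.mp this).1
          have := hSv hv.2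
          rw [hEv, Finset.mem_filter] at this
          exact ⟨hv.1, this.2⟩
        by_cases hg : good S
        · rw [if_pos hg]
          have : ∀ e ∈ E, ((-1:ℚ) ^ (1 + (Finset.univ.filter fun v => e ∈ S v).card) + 1)
              = 2 := by
            intro e he
            rw [hg e he]
            norm_num
          rw [Finset.prod_congr rfl this, Finset.prod_const]
        · rw [if_neg hg]
          simp only [hgood, not_forall] at hg
          obtain ⟨e, he, hne⟩ := hg
          apply Finset.prod_eq_zero he
          have h2 := hm e
          have : (Finset.univ.filter fun v => e ∈ S v).card = 0 ∨
              (Finset.univ.filter fun v => e ∈ S v).card = 2 := by omega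
          rcases this with h | h <;> rw [h] <;> norm_num
      rw [Finset.sum_congr rfl e2, Finset.sum_filter]
      simp only [Finset.mul_sum, mul_ite, mul_one, mul_zero]
      rfl
    -- main chain for part A
    have step3 : ∀ F ∈ E.powerset,
        ((-1 : ℚ) ^ F.card / 2 ^ E.card) *
          ∏ v : V, coeffSum ((1 - Polynomial.X) ^ subDegree F v *
              (1 + Polynomial.X) ^ (G.degree v - subDegree F v)) (P v)
        = ∑ ℓ ∈ Fintype.piFinset (fun v => Finset.range (G.degree v + 1)),
            (∏ v : V, (if ((ℓ v : ℕ) : ℤ) ∈ P v then (1:ℚ) else 0)) *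
              ((1 / 2 ^ E.card) * ((-1:ℚ) ^ F.card * ∏ v : V, c F v (ℓ v))) := by
      intro F hF
      rw [Finset.prod_congr rfl (fun v _ => step2 F hF v), Finset.prod_univ_sum, Finset.mul_sum]
      apply Finset.sum_congr rfl
      intro ℓ _
      rw [Finset.prod_mul_distrib]
      ring
    rw [Finset.sum_congr rfl step3, Finset.sum_comm]
    have step4 : ∀ ℓ ∈ Fintype.piFinset (fun v => Finset.range (G.degree v + 1)),
        ∑ F ∈ E.powerset,
          (∏ v : V, (if ((ℓ v : ℕ) : ℤ) ∈ P v then (1:ℚ) else 0)) *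
            ((1 / 2 ^ E.card) * ((-1:ℚ) ^ F.card * ∏ v : V, c F v (ℓ v)))
        = ∑ S ∈ ((Fintype.piFinset fun v => (Ev v).powersetCard (ℓ v)).filter good),
            ind S := by
      intro ℓ _
      rw [← Finset.mul_sum, ← Finset.mul_sum, key ℓ]
      have h2 : (1 / (2:ℚ) ^ E.card) * ((2:ℚ) ^ E.card *
          ∑ _S ∈ ((Fintype.piFinset fun v => (Ev v).powersetCard (ℓ v)).filter good), (1:ℚ))
          = ∑ _S ∈ ((Fintype.piFinset fun v => (Ev v).powersetCard (ℓ v)).filter good), (1:ℚ) := by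
        rw [← mul_assoc, one_div, inv_mul_cancel₀ (by positivity), one_mul]
      rw [h2, Finset.mul_sum]
      apply Finset.sum_congr rfl
      intro S hS
      rw [mul_one, hind]
      apply Finset.prod_congr rfl
      intro v _
      have hcv : (S v).card = ℓ v := by
        have := Fintype.mem_piFinset.mp (Finset.mem_filter.mp hS).1 v
        exact (Finset.mem_powersetCard.mp this).2
      rw [hcv]
    rw [Finset.sum_congr rfl step4]
    -- fiberwise sum
    have hmaps : ∀ S ∈ T, (fun v => (S v).card) ∈
        Fintype.piFinset (fun v => Finset.range (G.degree v + 1)) := by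
      intro S hS
      rw [Fintype.mem_piFinset]
      intro v
      rw [Finset.mem_range]
      have hSv : S v ⊆ Ev v :=
        Finset.mem_powerset.mp (Fintype.mem_piFinset.mp (Finset.mem_filter.mp hS).1 v)
      have := Finset.card_le_card hSv
      rw [hdeg v] at this
      omega
    rw [← Finset.sum_fiberwise_of_maps_to hmaps ind]
    apply Finset.sum_congr rfl
    intro ℓ _
    apply Finset.sum_congr _ (fun _ _ => rfl)
    ext S
    simp only [hT, Finset.mem_filter, Fintype.mem_piFinset, Finset.mem_powerset,
      Finset.mem_powersetCard, funext_iff]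
    constructor
    · rintro ⟨h1, h2⟩
      exact ⟨⟨fun a => (h1 a).1, h2⟩, fun a => (h1 a).2⟩
    · rintro ⟨⟨h1, h2⟩, h3⟩
      exact ⟨fun a => ⟨h1 a, h3 a⟩, h2⟩
  rw [partB, ← partA]
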